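/- For the state α_{V,d} = (1/2)(|0⟩⟨0| ⊗ I/d² + |0⟩⟨1| ⊗ V/d² + |1⟩⟨0| ⊗ V/d² + |1⟩⟨1| ⊗ I/d²) on ℂ² ⊗ (ℂ^d ⊗ ℂ^d), the trace-norm distance of its partial transpose (on the last factor) from the maximally mixed state satisfies ‖(α_{V,d})^Γ − I/(2d²)‖₁ ≤ 2/d. -/

import Mathlib

open Matrix BigOperators Filter

noncomputable section

def swapM (d : ℕ) : Matrix (Fin d × Fin d) (Fin d × Fin d) ℂ :=
  fun p q => if p.1 = q.2 ∧ p.2 = q.1 then 1 else 0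

def phiProj (d : ℕ) : Matrix (Fin d × Fin d) (Fin d × Fin d) ℂ :=
  fun p q => if p.1 = p.2 ∧ q.1 = q.2 then (d : ℂ)⁻¹ else 0

def ptB {d : ℕ} (ρ : Matrix (Fin d × Fin d) (Fin d × Fin d) ℂ) :
    Matrix (Fin d × Fin d) (Fin d × Fin d) ℂ :=
  fun p q => ρ (p.1, q.2) (q.1, p.2)

def rhoS (d : ℕ) : Matrix (Fin d × Fin d) (Fin d × Fin d) ℂ :=
  ((d : ℂ)^2 + (d : ℂ))⁻¹ • (1 + swapM d)

def rhoA (d : ℕ) : Matrix (Fin d × Fin d) (Fin d × Fin d) ℂ :=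
  ((d : ℂ)^2 - (d : ℂ))⁻¹ • (1 - swapM d)

def wernerT (d : ℕ) (θ : ℝ) : Matrix (Fin d × Fin d) (Fin d × Fin d) ℂ :=
  ((1 - θ : ℝ) : ℂ) • rhoS d + ((θ : ℝ) : ℂ) • rhoA d

def wernerA (d : ℕ) (α : ℝ) : Matrix (Fin d × Fin d) (Fin d × Fin d) ℂ :=
  (((1 + α) / 2 : ℝ) : ℂ) • rhoS d + (((1 - α) / 2 : ℝ) : ℂ) • rhoA d

def trB {dA dB : ℕ} (ρ : Matrix (Fin dA × Fin dB) (Fin dA × Fin dB) ℂ) :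
    Matrix (Fin dA) (Fin dA) ℂ :=
  fun i k => ∑ j, ρ (i, j) (k, j)

def trA {dA dB : ℕ} (ρ : Matrix (Fin dA × Fin dB) (Fin dA × Fin dB) ℂ) :
    Matrix (Fin dB) (Fin dB) ℂ :=
  fun j l => ∑ i, ρ (i, j) (i, l)

def nlog2 (x : ℝ) : ℝ := -(x * Real.logb 2 x)

def binEnt (p : ℝ) : ℝ := nlog2 p + nlog2 (1 - p)

def vN {n : Type*} [Fintype n] [DecidableEq n] (ρ : Matrix n n ℂ) : ℝ :=
  if h : ρ.IsHermitian then ∑ i, nlog2 (h.eigenvalues i) else 0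

def mutInfo {dA dB : ℕ} (ρ : Matrix (Fin dA × Fin dB) (Fin dA × Fin dB) ℂ) : ℝ :=
  vN (trB ρ) + vN (trA ρ) - vN ρ

def traceNorm {n : Type*} [Fintype n] [DecidableEq n] (X : Matrix n n ℂ) : ℝ :=
  if h : X.IsHermitian then ∑ i, |h.eigenvalues i| else 0

def mlog {n : Type*} [Fintype n] [DecidableEq n] (A : Matrix n n ℂ) : Matrix n n ℂ :=
  if h : A.IsHermitian then
    (h.eigenvectorUnitary : Matrix n n ℂ) *
      Matrix.diagonal (fun i => ((Real.logb 2 (h.eigenvalues i) : ℝ) : ℂ)) *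
      (star (h.eigenvectorUnitary : Matrix n n ℂ))
  else 0

def qRelEnt {n : Type*} [Fintype n] [DecidableEq n] (ρ σ : Matrix n n ℂ) : ℝ :=
  ((ρ * mlog ρ - ρ * mlog σ).trace).re

def tpow {m : Type*} [Fintype m] (ρ : Matrix m m ℂ) (n : ℕ) :
    Matrix (Fin n → m) (Fin n → m) ℂ :=
  fun f g => ∏ i, ρ (f i) (g i)

def klDiv2 {ι : Type*} [Fintype ι] (p q : ι → ℝ) : ℝ :=
  ∑ i, p i * Real.logb 2 (p i / q i)

def phiVec (d : ℕ) : Fin d × Fin d → ℂ :=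
  fun p => if p.1 = p.2 then (Complex.ofReal (Real.sqrt d))⁻¹ else 0

def alphaV (d : ℕ) : Matrix (Fin 2 × (Fin d × Fin d)) (Fin 2 × (Fin d × Fin d)) ℂ :=
  fun p q => (2 * (d : ℂ)^2)⁻¹ *
    (if p.1 = q.1 then (if p.2 = q.2 then 1 else 0)
     else (if p.2.1 = q.2.2 ∧ p.2.2 = q.2.1 then 1 else 0))

def ptLast {d : ℕ} (ρ : Matrix (Fin 2 × (Fin d × Fin d)) (Fin 2 × (Fin d × Fin d)) ℂ) :
    Matrix (Fin 2 × (Fin d × Fin d)) (Fin 2 × (Fin d × Fin d)) ℂ :=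
  fun p q => ρ (p.1, (p.2.1, q.2.2)) (q.1, (q.2.1, p.2.2))

def uVec (d : ℕ) : Fin 2 × (Fin d × Fin d) → ℂ :=
  fun p => if p.2.1 = p.2.2 then 1 else 0

def tVec (d : ℕ) : Fin 2 × (Fin d × Fin d) → ℂ :=
  fun p => (if p.1 = 0 then 1 else -1) * (if p.2.1 = p.2.2 then 1 else 0)

def Xm (d : ℕ) : Matrix (Fin 2 × (Fin d × Fin d)) (Fin 2 × (Fin d × Fin d)) ℂ :=
  ((4:ℂ) * (d : ℂ)^2)⁻¹ • (vecMulVec (uVec d) (uVec d) - vecMulVec (tVec d) (tVec d))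

lemma Xm_eq (d : ℕ) :
    ptLast (alphaV d) - (2 * (d : ℂ)^2)⁻¹ • 1 = Xm d := by
  ext ⟨i, a, b⟩ ⟨j, c, e⟩
  simp only [Matrix.sub_apply, Matrix.smul_apply, Xm, ptLast, alphaV, vecMulVec_apply,
    uVec, tVec, Matrix.one_apply, smul_eq_mul, Prod.mk.injEq, Prod.ext_iff]
  fin_cases i <;> fin_cases j <;>
    rcases eq_or_ne a c with rfl | h1 <;>
    rcases eq_or_ne b e with rfl | h2 <;>
    rcases eq_or_ne a b with rfl | h3 <;>
    simp_all [eq_comm] <;> (try split_ifs) <;> ring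

lemma Xm_herm (d : ℕ) : (Xm d).IsHermitian := by
  ext p q
  simp only [Matrix.conjTranspose_apply, Xm, Matrix.smul_apply, Matrix.sub_apply,
    vecMulVec_apply, uVec, tVec, smul_eq_mul, star_mul', star_sub, star_inv₀]
  split_ifs <;> simp

lemma vmv_mul {n : Type*} [Fintype n] (a b c e : n → ℂ) :
    vecMulVec a b * vecMulVec c e = (∑ r, b r * c r) • vecMulVec a e := by
  ext p q
  simp only [Matrix.mul_apply, vecMulVec_apply, Matrix.smul_apply, smul_eq_mul, Finset.sum_mul]
  exact Finset.sum_congr rfl fun r _ => by ring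

lemma trace_vmv {n : Type*} [Fintype n] (a b : n → ℂ) :
    (vecMulVec a b).trace = ∑ i, a i * b i := by
  simp [Matrix.trace, Matrix.diag, vecMulVec_apply]

lemma dot_uu (d : ℕ) : ∑ r, uVec d r * uVec d r = 2 * (d : ℂ) := by
  simp [uVec, Fintype.sum_prod_type, Finset.sum_ite_eq, Fin.sum_univ_two, mul_ite, two_mul]

lemma dot_ut (d : ℕ) : ∑ r, uVec d r * tVec d r = 0 := by
  simp [uVec, tVec, Fintype.sum_prod_type, Finset.sum_ite_eq, Fin.sum_univ_two, mul_ite]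

lemma dot_tu (d : ℕ) : ∑ r, tVec d r * uVec d r = 0 := by
  simp [uVec, tVec, Fintype.sum_prod_type, Finset.sum_ite_eq, Fin.sum_univ_two, mul_ite]

lemma dot_tt (d : ℕ) : ∑ r, tVec d r * tVec d r = 2 * (d : ℂ) := by
  simp [tVec, Fintype.sum_prod_type, Finset.sum_ite_eq, Fin.sum_univ_two, mul_ite, two_mul]

lemma P_sq (d : ℕ) :
    (vecMulVec (uVec d) (uVec d) - vecMulVec (tVec d) (tVec d)) *
      (vecMulVec (uVec d) (uVec d) - vecMulVec (tVec d) (tVec d)) =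
    (2 * (d : ℂ)) • (vecMulVec (uVec d) (uVec d) + vecMulVec (tVec d) (tVec d)) := by
  rw [sub_mul, mul_sub, mul_sub, vmv_mul, vmv_mul, vmv_mul, vmv_mul,
    dot_uu, dot_ut, dot_tu, dot_tt]
  module

lemma P_cube (d : ℕ) :
    (vecMulVec (uVec d) (uVec d) - vecMulVec (tVec d) (tVec d)) *
      (vecMulVec (uVec d) (uVec d) - vecMulVec (tVec d) (tVec d)) *
      (vecMulVec (uVec d) (uVec d) - vecMulVec (tVec d) (tVec d)) =
    ((4:ℂ) * (d : ℂ)^2) •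
      (vecMulVec (uVec d) (uVec d) - vecMulVec (tVec d) (tVec d)) := by
  rw [P_sq, Matrix.smul_mul, add_mul, mul_sub, mul_sub, vmv_mul, vmv_mul, vmv_mul, vmv_mul,
    dot_uu, dot_ut, dot_tu, dot_tt]
  module

lemma Xm_cube (d : ℕ) (hd : (d : ℂ) ≠ 0) :
    Xm d * Xm d * Xm d = ((4:ℂ) * (d : ℂ)^2)⁻¹ • Xm d := by
  rw [Xm]
  simp only [Matrix.smul_mul, Matrix.mul_smul, smul_smul]
  rw [P_cube, smul_smul]
  congr 1
  have h4 : (4:ℂ) * (d:ℂ)^2 ≠ 0 := mul_ne_zero (by norm_num) (pow_ne_zero _ hd)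
  field_simp

lemma Xm_trace_sq (d : ℕ) (hd : (d : ℂ) ≠ 0) :
    (Xm d * Xm d).trace = ((2:ℂ) * (d : ℂ)^2)⁻¹ := by
  rw [Xm]
  simp only [Matrix.smul_mul, Matrix.mul_smul, smul_smul]
  rw [P_sq, smul_smul, Matrix.trace_smul, Matrix.trace_add, trace_vmv, trace_vmv, dot_uu, dot_tt]
  field_simp
  ring_nf
  field_simp

theorem alphaV_pt_close_to_maximally_mixed (d : ℕ) (hd : 1 ≤ d) :
    traceNorm (ptLast (alphaV d) - (2 * (d : ℂ)^2)⁻¹ • 1) ≤ 2/(d : ℝ) := by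
  have hdC : (d : ℂ) ≠ 0 := Nat.cast_ne_zero.mpr (by omega)
  have hdR : (0:ℝ) < d := by exact_mod_cast hd
  rw [Xm_eq]
  have hA : (Xm d).IsHermitian := Xm_herm d
  rw [traceNorm, dif_pos hA]
  set lam := hA.eigenvalues with hlam
  set U : Matrix (Fin 2 × (Fin d × Fin d)) (Fin 2 × (Fin d × Fin d)) ℂ :=
    (hA.eigenvectorUnitary : Matrix (Fin 2 × (Fin d × Fin d)) (Fin 2 × (Fin d × Fin d)) ℂ) with hUdef
  have hUU : U * star U = 1 := Matrix.mem_unitaryGroup_iff.mp hA.eigenvectorUnitary.2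
  have hUU' : star U * U = 1 := Matrix.mem_unitaryGroup_iff'.mp hA.eigenvectorUnitary.2
  have hcancel : ∀ X : Matrix (Fin 2 × (Fin d × Fin d)) (Fin 2 × (Fin d × Fin d)) ℂ,
      U * (star U * X) = X := fun X => by rw [← Matrix.mul_assoc, hUU, Matrix.one_mul]
  have hDiag : star U * Xm d * U = Matrix.diagonal (RCLike.ofReal ∘ lam) :=
    by simpa using hA.conjStarAlgAut_star_eigenvectorUnitary
  set D : Matrix (Fin 2 × (Fin d × Fin d)) (Fin 2 × (Fin d × Fin d)) ℂ :=
    Matrix.diagonal (RCLike.ofReal ∘ lam) with hDdef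
  -- cube relation for eigenvalues
  have h3 : D * D * D = ((4:ℂ) * (d : ℂ)^2)⁻¹ • D := by
    rw [← hDiag]
    have e2 : (star U * Xm d * U) * (star U * Xm d * U) * (star U * Xm d * U)
        = star U * (Xm d * Xm d * Xm d) * U := by
      simp only [Matrix.mul_assoc, hcancel]
    rw [e2, Xm_cube d hdC, Matrix.mul_smul, Matrix.smul_mul]
  have hlam3 : ∀ i, (lam i : ℂ) * lam i * lam i = ((4:ℂ) * (d : ℂ)^2)⁻¹ * lam i := by
    intro i
    have h := congrFun (congrFun h3 (i)) i
    simpa [hDdef, Matrix.diagonal_mul_diagonal, Matrix.diagonal_apply_eq, Function.comp,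
      Matrix.smul_apply, smul_eq_mul] using h
  have hcube : ∀ i, lam i ^ 3 = (4 * (d:ℝ)^2)⁻¹ * lam i := by
    intro i
    have h2 := hlam3 i
    have h4 : ((lam i ^ 3 - (4 * (d:ℝ)^2)⁻¹ * lam i : ℝ) : ℂ) = 0 := by
      push_cast
      linear_combination h2
    have h5 : (lam i ^ 3 - (4 * (d:ℝ)^2)⁻¹ * lam i : ℝ) = 0 := by exact_mod_cast h4
    linarith
  -- trace of square
  have t1 : (Xm d * Xm d).trace = ∑ i, ((lam i : ℂ))^2 := by
    have e1 : star U * (Xm d * Xm d) * U = D * D := by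
      rw [← hDiag]; simp only [Matrix.mul_assoc, hcancel]
    have e0 : U * (star U * (Xm d * Xm d) * U) * star U = Xm d * Xm d := by
      simp only [← Matrix.mul_assoc]
      rw [hUU, Matrix.one_mul, Matrix.mul_assoc, hUU, Matrix.mul_one]
    calc (Xm d * Xm d).trace
        = (U * (star U * (Xm d * Xm d) * U) * star U).trace := by rw [e0]
      _ = (star U * U * (star U * (Xm d * Xm d) * U)).trace := by
          rw [Matrix.trace_mul_cycle]
      _ = (D * D).trace := by
          rw [hUU', Matrix.one_mul, e1]
      _ = ∑ i, ((lam i : ℂ))^2 := by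
          rw [hDdef, Matrix.diagonal_mul_diagonal, Matrix.trace_diagonal]
          exact Finset.sum_congr rfl fun i _ => by simp [Function.comp, pow_two]
  have htr : ∑ i, lam i ^ 2 = (2 * (d:ℝ)^2)⁻¹ := by
    have h2 : ((∑ i, lam i ^ 2 : ℝ) : ℂ) = ((2 * (d:ℝ)^2)⁻¹ : ℝ) := by
      push_cast
      rw [← t1, Xm_trace_sq d hdC]
    exact_mod_cast h2
  -- per-eigenvalue absolute value
  have habs : ∀ i, |lam i| = 2 * (d:ℝ) * lam i ^ 2 := by
    intro i
    rcases eq_or_ne (lam i) 0 with h0 | h0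
    · simp [h0]
    · have hsq : lam i ^ 2 = (4 * (d:ℝ)^2)⁻¹ :=
        mul_right_cancel₀ h0 (by linear_combination hcube i)
      have hinv : (4 * (d:ℝ)^2)⁻¹ = ((2 * (d:ℝ))⁻¹)^2 := by
        rw [inv_pow]; congr 1; ring
      have habs' : |lam i| = (2 * (d:ℝ))⁻¹ := by
        rw [← Real.sqrt_sq_eq_abs, hsq, hinv]
        exact Real.sqrt_sq (by positivity)
      rw [habs', hsq]
      field_simp
      ring
  calc ∑ i, |lam i| = ∑ i, 2 * (d:ℝ) * lam i ^ 2 := Finset.sum_congr rfl fun i _ => habs i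
    _ = 2 * (d:ℝ) * ∑ i, lam i ^ 2 := by rw [Finset.mul_sum]
    _ = 2 * (d:ℝ) * (2 * (d:ℝ)^2)⁻¹ := by rw [htr]
    _ = 1 / (d:ℝ) := by field_simp
    _ ≤ 2 / (d:ℝ) := by gcongr <;> norm_num

end
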